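/- Let p be a prime, k a perfect field of characteristic p, and let ρ : W₂(k)[x₁,…,xₙ] → k[x₁,…,xₙ] be the ring homomorphism on polynomial rings induced by the reduction map r : W₂(k) → k. Let f ∈ k[x₁,…,xₙ] be a nonzero polynomial and let f̃ ∈ W₂(k)[x₁,…,xₙ] be any polynomial with ρ(f̃) = f. Then the quotient ring W₂(k)[x₁,…,xₙ]/(f̃) is flat as a W₂(k)-module, and ρ induces an isomorphism of k-algebras (W₂(k)[x₁,…,xₙ]/(f̃)) ⊗_{W₂(k)} k ≅ k[x₁,…,xₙ]/(f). -/

import Mathlib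

/-- The reduction map `r : W₂(k) → k`, sending a length-two Witt vector to its
zeroth component. -/
noncomputable def wittReduction (p : ℕ) [hp : Fact p.Prime]
    (k : Type) [CommRing k] : TruncatedWittVector p 2 k →+* k where
  toFun x := x.coeff 0
  map_zero' := by
    show TruncatedWittVector.coeff 0 (0 : TruncatedWittVector p 2 k) = 0
    rw [← map_zero (WittVector.truncate (p := p) (R := k) 2), WittVector.coeff_truncate]
    exact WittVector.zero_coeff p k 0
  map_one' := by
    show TruncatedWittVector.coeff 0 (1 : TruncatedWittVector p 2 k) = 1
    rw [← map_one (WittVector.truncate (p := p) (R := k) 2), WittVector.coeff_truncate]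
    exact WittVector.one_coeff_zero p k
  map_add' x y := by
    obtain ⟨a, rfl⟩ := WittVector.truncate_surjective p 2 k x
    obtain ⟨b, rfl⟩ := WittVector.truncate_surjective p 2 k y
    show TruncatedWittVector.coeff 0 ((WittVector.truncate 2) a + (WittVector.truncate 2) b) =
      TruncatedWittVector.coeff 0 ((WittVector.truncate 2) a) +
        TruncatedWittVector.coeff 0 ((WittVector.truncate 2) b)
    rw [← map_add, WittVector.coeff_truncate, WittVector.coeff_truncate,
      WittVector.coeff_truncate]
    exact WittVector.add_coeff_zero a b
  map_mul' x y := by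
    obtain ⟨a, rfl⟩ := WittVector.truncate_surjective p 2 k x
    obtain ⟨b, rfl⟩ := WittVector.truncate_surjective p 2 k y
    show TruncatedWittVector.coeff 0 ((WittVector.truncate 2) a * (WittVector.truncate 2) b) =
      TruncatedWittVector.coeff 0 ((WittVector.truncate 2) a) *
        TruncatedWittVector.coeff 0 ((WittVector.truncate 2) b)
    rw [← map_mul, WittVector.coeff_truncate, WittVector.coeff_truncate,
      WittVector.coeff_truncate]
    exact WittVector.mul_coeff_zero a b

/-- `r x` is the zeroth Witt component of `x`. -/
theorem wittReduction_apply (p : ℕ) [Fact p.Prime] (k : Type) [CommRing k]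
    (x : TruncatedWittVector p 2 k) : wittReduction p k x = x.coeff 0 := rfl

section Witt
variable (p : ℕ) [hp : Fact p.Prime] (k : Type) [Field k] [CharP k p]

theorem wittReduction_surjective : Function.Surjective (wittReduction p k) := by
  intro a
  refine ⟨WittVector.truncate 2 (WittVector.mk p (fun i => if i = 0 then a else 0)), ?_⟩
  rw [wittReduction_apply, WittVector.coeff_truncate, WittVector.coeff_mk]
  simp

theorem witt_p_mul (w : WittVector p k) :
    (p : TruncatedWittVector p 2 k) * WittVector.truncate 2 w =
      WittVector.truncate 2 (WittVector.verschiebung (WittVector.frobenius w)) := by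
  rw [WittVector.verschiebung_frobenius, map_mul, map_natCast, mul_comm]

theorem witt_L1 (x : TruncatedWittVector p 2 k) (hx : wittReduction p k x = 0) :
    (p : TruncatedWittVector p 2 k) * x = 0 := by
  obtain ⟨w, rfl⟩ := WittVector.truncate_surjective p 2 k x
  rw [wittReduction_apply, WittVector.coeff_truncate, Fin.val_zero] at hx
  rw [witt_p_mul]
  ext i
  fin_cases i
  · rw [WittVector.coeff_truncate]
    simpa using WittVector.verschiebung_coeff_zero _
  · rw [WittVector.coeff_truncate]
    show (WittVector.verschiebung (WittVector.frobenius w)).coeff (0 + 1) = _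
    rw [WittVector.verschiebung_coeff_succ, WittVector.coeff_frobenius_charP, hx,
      zero_pow hp.out.ne_zero]
    rw [← map_zero (WittVector.truncate (p := p) (R := k) 2), WittVector.coeff_truncate]
    exact (WittVector.zero_coeff p k _).symm
end Witt

section Witt2
variable (p : ℕ) [hp : Fact p.Prime] (k : Type) [Field k] [CharP k p]

theorem witt_L2 (x : TruncatedWittVector p 2 k)
    (hx : (p : TruncatedWittVector p 2 k) * x = 0) : wittReduction p k x = 0 := by
  obtain ⟨w, rfl⟩ := WittVector.truncate_surjective p 2 k x
  rw [witt_p_mul] at hx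
  have h1 := congrArg (fun z => TruncatedWittVector.coeff (1 : Fin 2) z) hx
  simp only [WittVector.coeff_truncate] at h1
  rw [show ((1 : Fin 2) : ℕ) = 0 + 1 from rfl, WittVector.verschiebung_coeff_succ,
    WittVector.coeff_frobenius_charP] at h1
  rw [wittReduction_apply, WittVector.coeff_truncate, Fin.val_zero]
  have h0 : (0 : TruncatedWittVector p 2 k).coeff (1 : Fin 2) = 0 := by
    rw [← map_zero (WittVector.truncate (p := p) (R := k) 2), WittVector.coeff_truncate]
    exact WittVector.zero_coeff p k _
  rw [h0] at h1
  exact pow_eq_zero_iff hp.out.ne_zero |>.mp h1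

variable [PerfectRing k p]

theorem witt_L3 (x : TruncatedWittVector p 2 k) (hx : wittReduction p k x = 0) :
    ∃ y, x = (p : TruncatedWittVector p 2 k) * y := by
  obtain ⟨w, rfl⟩ := WittVector.truncate_surjective p 2 k x
  rw [wittReduction_apply, WittVector.coeff_truncate, Fin.val_zero] at hx
  refine ⟨WittVector.truncate 2 (WittVector.mk p
    (fun i => if i = 0 then (frobeniusEquiv k p).symm (w.coeff 1) else 0)), ?_⟩
  rw [witt_p_mul]
  ext i
  fin_cases i
  · rw [WittVector.coeff_truncate, WittVector.coeff_truncate]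
    simpa using hx
  · rw [WittVector.coeff_truncate, WittVector.coeff_truncate]
    show w.coeff 1 = (WittVector.verschiebung (WittVector.frobenius _)).coeff (0 + 1)
    rw [WittVector.verschiebung_coeff_succ, WittVector.coeff_frobenius_charP,
      WittVector.coeff_mk]
    simp [frobeniusEquiv_symm_pow_p]

theorem witt_sq_zero (x y : TruncatedWittVector p 2 k) (hx : wittReduction p k x = 0)
    (hy : wittReduction p k y = 0) : x * y = 0 := by
  obtain ⟨x', rfl⟩ := witt_L3 p k x hx
  rw [mul_comm (p : TruncatedWittVector p 2 k) x', mul_assoc, witt_L1 p k y hy, mul_zero]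

theorem witt_r_p : wittReduction p k (p : TruncatedWittVector p 2 k) = 0 := by
  rw [map_natCast]; exact CharP.cast_eq_zero k p

theorem witt_unit (x : TruncatedWittVector p 2 k) (hx : wittReduction p k x ≠ 0) :
    IsUnit x := by
  obtain ⟨y, hy⟩ := wittReduction_surjective p k (wittReduction p k x)⁻¹
  set z := x * y - 1 with hz
  have hrz : wittReduction p k z = 0 := by
    rw [hz, map_sub, map_mul, map_one, hy, mul_inv_cancel₀ hx, sub_self]
  have hzz : z * z = 0 := witt_sq_zero p k z z hrz hrz
  refine IsUnit.of_mul_eq_one (a := x) (y * (1 - z)) ?_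
  have hxy : x * y = 1 + z := by rw [hz]; ring
  calc x * (y * (1 - z)) = (x * y) * (1 - z) := by ring
    _ = (1 + z) * (1 - z) := by rw [hxy]
    _ = 1 - z * z := by ring
    _ = 1 := by rw [hzz, sub_zero]

theorem witt_ker_eq : RingHom.ker (wittReduction p k) =
    Ideal.span {(p : TruncatedWittVector p 2 k)} := by
  apply le_antisymm
  · intro x hx
    obtain ⟨y, rfl⟩ := witt_L3 p k x (by exact hx)
    exact Ideal.mem_span_singleton.2 ⟨y, rfl⟩
  · rw [Ideal.span_le, Set.singleton_subset_iff]
    exact witt_r_p p k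

theorem witt_ideal_classify (I : Ideal (TruncatedWittVector p 2 k)) :
    I = ⊥ ∨ I = Ideal.span {(p : TruncatedWittVector p 2 k)} ∨ I = ⊤ := by
  by_cases hker : I ≤ RingHom.ker (wittReduction p k)
  · by_cases hbot : I = ⊥
    · exact Or.inl hbot
    · refine Or.inr (Or.inl ?_)
      obtain ⟨x, hxI, hx0⟩ := Submodule.exists_mem_ne_zero_of_ne_bot hbot
      obtain ⟨y, rfl⟩ := witt_L3 p k x (hker hxI)
      have hry : wittReduction p k y ≠ 0 := by
        intro h
        exact hx0 (by rw [witt_L1 p k y h])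
      obtain ⟨u, rfl⟩ := witt_unit p k y hry
      have hpI : (p : TruncatedWittVector p 2 k) ∈ I := by
        have := I.mul_mem_right (↑u⁻¹) hxI
        rwa [mul_assoc, ← Units.val_mul, mul_inv_cancel, Units.val_one, mul_one] at this
      apply le_antisymm
      · rw [← witt_ker_eq p k]
        exact hker
      · rw [Ideal.span_le, Set.singleton_subset_iff]; exact hpI
  · refine Or.inr (Or.inr ?_)
    rw [SetLike.le_def] at hker
    push_neg at hker
    obtain ⟨x, hxI, hx⟩ := hker
    exact Ideal.eq_top_of_isUnit_mem I hxI (witt_unit p k x hx)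
end Witt2

section Poly
open MvPolynomial
variable (p n : ℕ) [hp : Fact p.Prime] (k : Type) [Field k] [CharP k p] [PerfectRing k p]
  (f : MvPolynomial (Fin n) k)
  (F : MvPolynomial (Fin n) (TruncatedWittVector p 2 k))

theorem poly_decomp (hf : f ≠ 0) (hF : MvPolynomial.map (wittReduction p k) F = f)
    (g : MvPolynomial (Fin n) (TruncatedWittVector p 2 k))
    (hg : (p : TruncatedWittVector p 2 k) • g ∈ Ideal.span {F}) :
    ∃ h₁ q₁, g = F * h₁ + (p : TruncatedWittVector p 2 k) • q₁ := by
  obtain ⟨h, hh⟩ := Ideal.mem_span_singleton'.1 hg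
  have hmap : MvPolynomial.map (wittReduction p k) h * f = 0 := by
    have := congrArg (MvPolynomial.map (wittReduction p k)) hh
    rw [map_mul, hF, smul_eq_C_mul, map_mul, map_C, witt_r_p, map_zero, zero_mul] at this
    exact this
  have h0 : MvPolynomial.map (wittReduction p k) h = 0 :=
    (mul_eq_zero.1 hmap).resolve_right hf
  have hspan : Ideal.span {MvPolynomial.C (p : TruncatedWittVector p 2 k)} =
      Ideal.map (MvPolynomial.C (σ := Fin n)) (RingHom.ker (wittReduction p k)) := by
    rw [witt_ker_eq p k, Ideal.map_span, Set.image_singleton]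
  have hmem : h ∈ Ideal.span {MvPolynomial.C (p : TruncatedWittVector p 2 k)} := by
    rw [hspan]
    refine MvPolynomial.mem_map_C_iff.2 fun m => ?_
    rw [RingHom.mem_ker, ← MvPolynomial.coeff_map, h0, MvPolynomial.coeff_zero]
  obtain ⟨h₁, hh₁⟩ := Ideal.mem_span_singleton'.1 hmem
  have hq : (p : TruncatedWittVector p 2 k) • (g - F * h₁) = 0 := by
    rw [smul_sub, ← hh, ← hh₁, smul_eq_C_mul]
    ring
  have hqmem : g - F * h₁ ∈ Ideal.span {MvPolynomial.C (p : TruncatedWittVector p 2 k)} := by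
    rw [hspan]
    refine MvPolynomial.mem_map_C_iff.2 fun m => ?_
    have hc := congrArg (MvPolynomial.coeff m) hq
    rw [MvPolynomial.coeff_smul, MvPolynomial.coeff_zero] at hc
    rw [RingHom.mem_ker]
    exact witt_L2 p k _ (by rwa [smul_eq_mul] at hc)
  obtain ⟨q₁, hq₁⟩ := Ideal.mem_span_singleton'.1 hqmem
  refine ⟨h₁, q₁, ?_⟩
  rw [smul_eq_C_mul]
  linear_combination -hq₁

open LinearMap TensorProduct in
set_option maxHeartbeats 1000000 in
set_option synthInstance.maxHeartbeats 200000 in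
theorem flatAux (hf : f ≠ 0) (hF : MvPolynomial.map (wittReduction p k) F = f) :
    Module.Flat (TruncatedWittVector p 2 k)
      (MvPolynomial (Fin n) (TruncatedWittVector p 2 k) ⧸ Ideal.span {F}) := by
  rw [Module.Flat.iff_rTensor_injective']
  intro I
  rcases witt_ideal_classify p k I with rfl | rfl | rfl
  · have hzero : ∀ t : (⊥ : Ideal (TruncatedWittVector p 2 k)) ⊗[TruncatedWittVector p 2 k]
        (MvPolynomial (Fin n) (TruncatedWittVector p 2 k) ⧸ Ideal.span {F}), t = 0 := by
      intro t
      induction t using TensorProduct.induction_on with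
      | zero => rfl
      | tmul x m =>
        obtain ⟨x, hx⟩ := x
        rw [Submodule.mem_bot] at hx
        subst hx
        rw [show (⟨0, Submodule.zero_mem _⟩ : (⊥ : Ideal (TruncatedWittVector p 2 k))) = 0
          from rfl, zero_tmul]
      | add a b ha hb => rw [ha, hb, add_zero]
    intro a b _
    rw [hzero a, hzero b]
  · -- main case J = span {p}
    have hπmem : (p : TruncatedWittVector p 2 k) ∈
        Ideal.span {(p : TruncatedWittVector p 2 k)} := Ideal.mem_span_singleton_self _
    have hπ2 : (p : TruncatedWittVector p 2 k) * (p : TruncatedWittVector p 2 k) = 0 :=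
      witt_sq_zero p k _ _ (witt_r_p p k) (witt_r_p p k)
    set π : Ideal.span {(p : TruncatedWittVector p 2 k)} := ⟨(p : TruncatedWittVector p 2 k),
      hπmem⟩ with hπ
    have hsur : ∀ t : (Ideal.span {(p : TruncatedWittVector p 2 k)} :
          Ideal (TruncatedWittVector p 2 k)) ⊗[TruncatedWittVector p 2 k]
          (MvPolynomial (Fin n) (TruncatedWittVector p 2 k) ⧸ Ideal.span {F}),
        ∃ m, t = π ⊗ₜ m := by
      intro t
      induction t using TensorProduct.induction_on with
      | zero => exact ⟨0, (tmul_zero _ _).symm⟩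
      | tmul x m =>
        obtain ⟨x, hx⟩ := x
        obtain ⟨c, hc⟩ := Ideal.mem_span_singleton'.1 hx
        have hxc : (⟨x, hx⟩ : (Ideal.span {(p : TruncatedWittVector p 2 k)} :
            Ideal (TruncatedWittVector p 2 k))) = c • π := by
          apply Subtype.ext
          simp only [hπ, SetLike.mk_smul_mk, smul_eq_mul]
          exact hc.symm
        exact ⟨c • m, by rw [hxc, smul_tmul]⟩
      | add a b ha hb =>
        obtain ⟨m₁, rfl⟩ := ha
        obtain ⟨m₂, rfl⟩ := hb
        exact ⟨m₁ + m₂, (tmul_add _ _ _).symm⟩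
    suffices key : ∀ t : (Ideal.span {(p : TruncatedWittVector p 2 k)} :
          Ideal (TruncatedWittVector p 2 k)) ⊗[TruncatedWittVector p 2 k]
          (MvPolynomial (Fin n) (TruncatedWittVector p 2 k) ⧸ Ideal.span {F}),
        rTensor _ (Submodule.subtype _) t = 0 → t = 0 by
      intro a b hab
      have h2 : rTensor _ (Submodule.subtype _) (a - b) = 0 := by
        rw [map_sub, hab, sub_self]
      have := key _ h2
      rwa [sub_eq_zero] at this
    intro t ht
    obtain ⟨m, rfl⟩ := hsur t
    have hπm : (p : TruncatedWittVector p 2 k) • m = 0 := by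
      have hl := congrArg (TensorProduct.lid (TruncatedWittVector p 2 k)
        (MvPolynomial (Fin n) (TruncatedWittVector p 2 k) ⧸ Ideal.span {F})) ht
      rw [rTensor_tmul, map_zero, Submodule.coe_subtype, lid_tmul] at hl
      exact hl
    obtain ⟨g, rfl⟩ := Ideal.Quotient.mk_surjective m
    have hsm : ∀ (a : TruncatedWittVector p 2 k)
        (q : MvPolynomial (Fin n) (TruncatedWittVector p 2 k)),
        a • Ideal.Quotient.mk (Ideal.span {F}) q = Ideal.Quotient.mk (Ideal.span {F}) (a • q) :=
      fun a q => (map_smul (Ideal.Quotient.mkₐ (TruncatedWittVector p 2 k)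
        (Ideal.span {F})) a q).symm
    have hgF : (p : TruncatedWittVector p 2 k) • g ∈ Ideal.span {F} := by
      rw [← Ideal.Quotient.eq_zero_iff_mem, ← hsm, hπm]
    obtain ⟨h₁, q₁, hg⟩ := poly_decomp p n k f F hf hF g hgF
    have hmk : Ideal.Quotient.mk (Ideal.span {F}) g =
        (p : TruncatedWittVector p 2 k) • Ideal.Quotient.mk (Ideal.span {F}) q₁ := by
      rw [hg, map_add, hsm]
      have h3 : Ideal.Quotient.mk (Ideal.span {F}) (F * h₁) = 0 :=
        Ideal.Quotient.eq_zero_iff_mem.2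
          (Ideal.mul_mem_right _ _ (Ideal.subset_span rfl))
      rw [h3, zero_add]
    have hπzero : (p : TruncatedWittVector p 2 k) • π = 0 := by
      apply Subtype.ext
      simp only [hπ, SetLike.mk_smul_mk, smul_eq_mul]
      exact hπ2
    rw [hmk, tmul_smul, smul_tmul', hπzero, zero_tmul]
  · -- top case
    intro a b hab
    set back : TruncatedWittVector p 2 k →ₗ[TruncatedWittVector p 2 k]
        ((⊤ : Ideal (TruncatedWittVector p 2 k)) :
          Submodule (TruncatedWittVector p 2 k) (TruncatedWittVector p 2 k)) :=
      LinearMap.codRestrict _ LinearMap.id (fun _ => Submodule.mem_top) with hback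
    have hcomp : back ∘ₗ Submodule.subtype _ = LinearMap.id := by
      ext x
      rfl
    have h1 := congrArg (rTensor (MvPolynomial (Fin n) (TruncatedWittVector p 2 k) ⧸
      Ideal.span {F}) back) hab
    rwa [← rTensor_comp_apply, ← rTensor_comp_apply, hcomp, rTensor_id,
      LinearMap.id_apply, LinearMap.id_apply] at h1
end Poly

section Iso
variable (p n : ℕ) [hp : Fact p.Prime] (k : Type) [Field k] [CharP k p] [PerfectRing k p]
  (f : MvPolynomial (Fin n) k)
  (F : MvPolynomial (Fin n) (TruncatedWittVector p 2 k))

open TensorProduct in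
set_option maxHeartbeats 1000000 in
set_option synthInstance.maxHeartbeats 400000 in
theorem isoAux (hF : MvPolynomial.map (wittReduction p k) F = f) :
    letI : Algebra (TruncatedWittVector p 2 k) k := (wittReduction p k).toAlgebra
    ∃ e : (k ⊗[TruncatedWittVector p 2 k]
        (MvPolynomial (Fin n) (TruncatedWittVector p 2 k) ⧸ Ideal.span {F}))
        ≃ₐ[k] (MvPolynomial (Fin n) k ⧸ Ideal.span {f}),
      ∀ g : MvPolynomial (Fin n) (TruncatedWittVector p 2 k),
        e (1 ⊗ₜ Ideal.Quotient.mk (Ideal.span {F}) g) =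
          Ideal.Quotient.mk (Ideal.span {f}) (MvPolynomial.map (wittReduction p k) g) := by
  letI : Algebra (TruncatedWittVector p 2 k) k := (wittReduction p k).toAlgebra
  have hvanish : ∀ a ∈ Ideal.span {F}, ((Ideal.Quotient.mk (Ideal.span {f})).comp
      (MvPolynomial.map (wittReduction p k))) a = 0 := by
    intro a ha
    obtain ⟨c, hc⟩ := Ideal.mem_span_singleton'.1 ha
    rw [RingHom.comp_apply, ← hc, map_mul, hF]
    exact Ideal.Quotient.eq_zero_iff_mem.2
      (Ideal.mul_mem_left _ _ (Ideal.subset_span rfl))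
  let Φ₀ := Ideal.Quotient.lift (Ideal.span {F}) ((Ideal.Quotient.mk (Ideal.span {f})).comp
      (MvPolynomial.map (wittReduction p k))) hvanish
  let Φ₁ : (MvPolynomial (Fin n) (TruncatedWittVector p 2 k) ⧸ Ideal.span {F}) →ₐ[TruncatedWittVector p 2 k]
      (MvPolynomial (Fin n) k ⧸ Ideal.span {f}) :=
    { Φ₀ with
      commutes' := fun a => by
        show Ideal.Quotient.mk (Ideal.span {f})
          (MvPolynomial.map (wittReduction p k) (MvPolynomial.C a)) = _
        rw [MvPolynomial.map_C]
        rfl }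
  let Φ := Algebra.TensorProduct.lift (Algebra.ofId k (MvPolynomial (Fin n) k ⧸ Ideal.span {f}))
    Φ₁ (fun x y => Commute.all _ _)
  let Ψ₀ : MvPolynomial (Fin n) k →ₐ[k] (k ⊗[TruncatedWittVector p 2 k]
      (MvPolynomial (Fin n) (TruncatedWittVector p 2 k) ⧸ Ideal.span {F})) :=
    MvPolynomial.aeval (fun i => (1 : k) ⊗ₜ[TruncatedWittVector p 2 k] Ideal.Quotient.mk (Ideal.span {F})
      (MvPolynomial.X i))
  have hΦ₁mk : ∀ g : MvPolynomial (Fin n) (TruncatedWittVector p 2 k),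
      Φ₁ (Ideal.Quotient.mk (Ideal.span {F}) g) =
        Ideal.Quotient.mk (Ideal.span {f}) (MvPolynomial.map (wittReduction p k) g) :=
    fun g => rfl
  have hΦtmul : ∀ g : MvPolynomial (Fin n) (TruncatedWittVector p 2 k),
      Φ ((1 : k) ⊗ₜ Ideal.Quotient.mk (Ideal.span {F}) g) =
        Ideal.Quotient.mk (Ideal.span {f}) (MvPolynomial.map (wittReduction p k) g) := by
    intro g
    show (Algebra.ofId k _) 1 * Φ₁ (Ideal.Quotient.mk (Ideal.span {F}) g) = _
    rw [map_one, one_mul, hΦ₁mk]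
  have hcomm : ∀ g : MvPolynomial (Fin n) (TruncatedWittVector p 2 k),
      Ψ₀ (MvPolynomial.map (wittReduction p k) g) =
        (1 : k) ⊗ₜ Ideal.Quotient.mk (Ideal.span {F}) g := by
    intro g
    have hext : (Ψ₀.toRingHom.comp (MvPolynomial.map (wittReduction p k))) =
        ((Algebra.TensorProduct.includeRight (R := TruncatedWittVector p 2 k) (A := k)).toRingHom.comp
          (Ideal.Quotient.mk (Ideal.span {F}))) := by
      apply MvPolynomial.ringHom_ext
      · intro a
        show Ψ₀ (MvPolynomial.map (wittReduction p k) (MvPolynomial.C a)) =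
          (1 : k) ⊗ₜ Ideal.Quotient.mk (Ideal.span {F}) (MvPolynomial.C a)
        rw [MvPolynomial.map_C,
          show Ψ₀ (MvPolynomial.C ((wittReduction p k) a)) =
            algebraMap k _ ((wittReduction p k) a) from MvPolynomial.aeval_C _ _]
        have h1 : Ideal.Quotient.mk (Ideal.span {F}) (MvPolynomial.C a) =
            a • (1 : MvPolynomial (Fin n) (TruncatedWittVector p 2 k) ⧸ Ideal.span {F}) := by
          have h2 := map_smul (Ideal.Quotient.mkₐ (TruncatedWittVector p 2 k)
            (Ideal.span {F})) a (1 : MvPolynomial (Fin n) (TruncatedWittVector p 2 k))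
          rw [MvPolynomial.smul_eq_C_mul, mul_one, map_one] at h2
          exact h2
        rw [h1, tmul_smul, Algebra.TensorProduct.algebraMap_apply, smul_tmul']
        congr 1
        rw [Algebra.smul_def, mul_one]
        rfl
      · intro i
        show Ψ₀ (MvPolynomial.map (wittReduction p k) (MvPolynomial.X i)) = _
        rw [MvPolynomial.map_X]
        exact MvPolynomial.aeval_X _ i
    exact RingHom.congr_fun hext g
  have hΨvanish : ∀ a ∈ Ideal.span {f}, Ψ₀ a = 0 := by
    intro a ha
    obtain ⟨c, hc⟩ := Ideal.mem_span_singleton'.1 ha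
    have hFz : Ideal.Quotient.mk (Ideal.span {F}) F = 0 :=
      Ideal.Quotient.eq_zero_iff_mem.2 (Ideal.subset_span rfl)
    rw [← hc, map_mul, ← hF, hcomm, hFz]
    rw [tmul_zero]
    exact mul_zero (Ψ₀ c)
  let Ψ := Ideal.Quotient.liftₐ (Ideal.span {f}) Ψ₀ hΨvanish
  have hΨmk : ∀ g' : MvPolynomial (Fin n) k,
      Ψ (Ideal.Quotient.mk (Ideal.span {f}) g') = Ψ₀ g' := fun g' => rfl
  have hΦΨ : Φ.comp Ψ = AlgHom.id k (MvPolynomial (Fin n) k ⧸ Ideal.span {f}) := by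
    have h2 : (Φ.comp Ψ₀ : MvPolynomial (Fin n) k →ₐ[k] _) =
        Ideal.Quotient.mkₐ k (Ideal.span {f}) := by
      apply MvPolynomial.algHom_ext
      intro i
      show Φ (Ψ₀ (MvPolynomial.X i)) = Ideal.Quotient.mk (Ideal.span {f}) (MvPolynomial.X i)
      have : Ψ₀ (MvPolynomial.X i) = (1 : k) ⊗ₜ Ideal.Quotient.mk (Ideal.span {F})
          (MvPolynomial.X i) := MvPolynomial.aeval_X _ i
      rw [this, hΦtmul, MvPolynomial.map_X]
    apply AlgHom.ext
    intro x
    obtain ⟨g', rfl⟩ := Ideal.Quotient.mk_surjective x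
    rw [AlgHom.comp_apply, hΨmk]
    exact AlgHom.congr_fun h2 g'
  have hΨΦ : Ψ.comp Φ = AlgHom.id k _ := by
    apply AlgHom.ext
    intro t
    rw [AlgHom.comp_apply, AlgHom.id_apply]
    induction t using TensorProduct.induction_on with
    | zero => rw [map_zero, map_zero]
    | tmul c m =>
      obtain ⟨g, rfl⟩ := Ideal.Quotient.mk_surjective m
      have hct : c ⊗ₜ[TruncatedWittVector p 2 k] Ideal.Quotient.mk (Ideal.span {F}) g =
          c • ((1 : k) ⊗ₜ[TruncatedWittVector p 2 k] Ideal.Quotient.mk (Ideal.span {F}) g) := by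
        rw [smul_tmul', smul_eq_mul, mul_one]
      rw [hct, map_smul, map_smul, hΦtmul, hΨmk, hcomm]
    | add a b ha hb => rw [map_add, map_add, ha, hb]
  refine ⟨AlgEquiv.ofAlgHom Φ Ψ hΦΨ hΨΦ, ?_⟩
  intro g
  exact hΦtmul g
end Iso

open TensorProduct in
/-- Let `p` be a prime, `k` a perfect field of characteristic `p`, and
`ρ : W₂(k)[x₁,…,xₙ] → k[x₁,…,xₙ]` the homomorphism induced by the reduction
`r : W₂(k) → k`. Let `f ∈ k[x₁,…,xₙ]` be a nonzero polynomial and `f̃` any polynomial with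
`ρ(f̃) = f`. Then `W₂(k)[x₁,…,xₙ]/(f̃)` is flat as a `W₂(k)`-module, and `ρ` induces an
isomorphism of `k`-algebras `(W₂(k)[x₁,…,xₙ]/(f̃)) ⊗_{W₂(k)} k ≅ k[x₁,…,xₙ]/(f)`. -/
theorem flat_and_baseChange_of_lift_of_polynomial
    (p n : ℕ) [Fact p.Prime] (k : Type) [Field k] [CharP k p] [PerfectRing k p]
    (f : MvPolynomial (Fin n) k) (hf : f ≠ 0)
    (F : MvPolynomial (Fin n) (TruncatedWittVector p 2 k))
    (hF : MvPolynomial.map (wittReduction p k) F = f) :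
    letI : Algebra (TruncatedWittVector p 2 k) k := (wittReduction p k).toAlgebra
    Module.Flat (TruncatedWittVector p 2 k)
      (MvPolynomial (Fin n) (TruncatedWittVector p 2 k) ⧸ Ideal.span {F}) ∧
    ∃ e : (k ⊗[TruncatedWittVector p 2 k]
        (MvPolynomial (Fin n) (TruncatedWittVector p 2 k) ⧸ Ideal.span {F}))
        ≃ₐ[k] (MvPolynomial (Fin n) k ⧸ Ideal.span {f}),
      ∀ g : MvPolynomial (Fin n) (TruncatedWittVector p 2 k),
        e (1 ⊗ₜ Ideal.Quotient.mk (Ideal.span {F}) g) =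
          Ideal.Quotient.mk (Ideal.span {f}) (MvPolynomial.map (wittReduction p k) g) := by
  exact ⟨flatAux p n k f F hf hF, isoAux p n k f F hF⟩
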